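/- Factorial growth comparison for Gevrey classes: for s ≥ 1 and ε ∈ (0,1), there exists a constant C ≥ 1 such that for all m ∈ ℕ with m ≥ 1, ⌈m/ε⌉!^s ≤ C^{m+1} · (m!)^{s/ε}. (This shows that bounds of the form Cᵐ⌈m/ε⌉!^s imply membership in the Gevrey class G^{s/ε}.) -/

import Mathlib

open Real

theorem gevrey_factorial_growth (s : ℝ) (hs : 1 ≤ s) (ε : ℝ) (hε0 : 0 < ε) (hε1 : ε < 1) :
    ∃ C : ℝ, 1 ≤ C ∧ ∀ m : ℕ, 1 ≤ m →
      (((Nat.ceil ((m : ℝ) / ε)).factorial : ℝ)) ^ s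
        ≤ C ^ (m + 1) * ((m.factorial : ℝ)) ^ (s / ε) := by
  have he1 : (1:ℝ) ≤ Real.exp 1 := by
    have := Real.add_one_le_exp (1:ℝ); linarith
  set B : ℝ := 4 * Real.exp 1 / ε with hB
  have hB1 : (1:ℝ) ≤ B := by
    rw [hB, le_div_iff₀ hε0]; nlinarith
  have hB0 : (0:ℝ) ≤ B := by linarith
  have hs0 : 0 ≤ s := by linarith
  have hsε : 0 ≤ 2 * s / ε := by positivity
  refine ⟨B ^ (2 * s / ε), Real.one_le_rpow hB1 hsε, ?_⟩
  intro m hm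
  set u : ℝ := ε⁻¹ with hu'
  have hu : (1:ℝ) ≤ u := (one_le_inv_iff₀).2 ⟨hε0, hε1.le⟩
  have hu0 : (0:ℝ) < u := by linarith
  set N : ℕ := Nat.ceil ((m : ℝ) / ε) with hN
  have hm1 : (1:ℝ) ≤ (m:ℝ) := by exact_mod_cast hm
  have hmpos : (0:ℝ) < m := by linarith
  have hNge : (m:ℝ) / ε ≤ (N:ℝ) := Nat.le_ceil _
  have hNlt : (N:ℝ) ≤ (m:ℝ) / ε + 1 := by
    have := Nat.ceil_lt_add_one (by positivity : (0:ℝ) ≤ (m:ℝ)/ε)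
    linarith
  have hdiv : (m:ℝ) / ε = (m:ℝ) * u := by rw [hu', div_eq_mul_inv]
  have hmu1 : (1:ℝ) ≤ (m:ℝ) * u := by nlinarith
  have hNle2 : (N:ℝ) ≤ 2 * ((m:ℝ) * u) := by
    rw [hdiv] at hNlt; linarith
  have hN1 : (1:ℝ) ≤ (N:ℝ) := le_trans (by rw [hdiv]; exact hmu1) hNge
  have hN0 : (0:ℝ) ≤ (N:ℝ) := by linarith
  have h2mu1 : (1:ℝ) ≤ 2 * ((m:ℝ) * u) := by linarith
  -- step 1: N!^s ≤ N^(N*s)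
  have step1 : ((N.factorial : ℝ)) ^ s ≤ (N:ℝ) ^ ((N:ℝ) * s) := by
    have h1 : ((N.factorial : ℝ)) ≤ (N:ℝ) ^ (N:ℕ) := by
      exact_mod_cast Nat.factorial_le_pow N
    calc ((N.factorial : ℝ)) ^ s ≤ ((N:ℝ) ^ (N:ℕ)) ^ s :=
          Real.rpow_le_rpow (by positivity) h1 hs0
      _ = (N:ℝ) ^ ((N:ℝ) * s) := by
          rw [← Real.rpow_natCast (N:ℝ) N, ← Real.rpow_mul hN0]
  -- step 2
  have step2 : (N:ℝ) ^ ((N:ℝ) * s) ≤ (2 * ((m:ℝ) * u)) ^ (((m:ℝ) * u + 1) * s) := by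
    calc (N:ℝ) ^ ((N:ℝ) * s) ≤ (2 * ((m:ℝ) * u)) ^ ((N:ℝ) * s) :=
          Real.rpow_le_rpow hN0 hNle2 (by positivity)
      _ ≤ (2 * ((m:ℝ) * u)) ^ (((m:ℝ) * u + 1) * s) := by
          apply Real.rpow_le_rpow_of_exponent_le h2mu1
          rw [hdiv] at hNlt; nlinarith
  -- step 3: split base
  have step3 : (2 * ((m:ℝ) * u)) ^ (((m:ℝ) * u + 1) * s)
      = (2 * u) ^ (((m:ℝ) * u + 1) * s) * (m:ℝ) ^ (((m:ℝ) * u + 1) * s) := by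
    rw [← Real.mul_rpow (by positivity) (by positivity)]
    ring_nf
  -- step 4: split exponent of m
  have step4 : (m:ℝ) ^ (((m:ℝ) * u + 1) * s)
      = (m:ℝ) ^ ((m:ℝ) * u * s) * (m:ℝ) ^ s := by
    rw [← Real.rpow_add hmpos]; ring_nf
  -- stirling: m^m ≤ e^m * m!
  have stirling : (m:ℝ) ^ (m:ℕ) ≤ (Real.exp 1) ^ ((m:ℝ)) * (m.factorial : ℝ) := by
    have h := Real.pow_div_factorial_le_exp (x := (m:ℝ)) (by positivity) m
    have hf : (0:ℝ) < (m.factorial : ℝ) := by exact_mod_cast m.factorial_pos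
    rw [div_le_iff₀ hf] at h
    calc (m:ℝ) ^ (m:ℕ) ≤ Real.exp (m:ℝ) * (m.factorial : ℝ) := h
      _ = (Real.exp 1) ^ ((m:ℝ)) * (m.factorial : ℝ) := by
          rw [← Real.exp_one_rpow (m:ℝ)]
  have hsu0 : (0:ℝ) ≤ s * u := by positivity
  have step5 : (m:ℝ) ^ ((m:ℝ) * u * s)
      ≤ (Real.exp 1) ^ ((m:ℝ) * u * s) * (m.factorial : ℝ) ^ (s / ε) := by
    have h1 : ((m:ℝ) ^ (m:ℕ)) ^ (s * u) ≤ ((Real.exp 1) ^ ((m:ℝ)) * (m.factorial : ℝ)) ^ (s * u) :=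
      Real.rpow_le_rpow (by positivity) stirling hsu0
    have hsε' : s / ε = s * u := by rw [hu', div_eq_mul_inv]
    calc (m:ℝ) ^ ((m:ℝ) * u * s) = ((m:ℝ) ^ (m:ℕ)) ^ (s * u) := by
          rw [← Real.rpow_natCast (m:ℝ) m, ← Real.rpow_mul (by positivity)]
          ring_nf
      _ ≤ ((Real.exp 1) ^ ((m:ℝ)) * (m.factorial : ℝ)) ^ (s * u) := h1
      _ = (Real.exp 1) ^ ((m:ℝ) * u * s) * (m.factorial : ℝ) ^ (s / ε) := by
          rw [Real.mul_rpow (by positivity) (by positivity),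
            ← Real.rpow_mul (Real.exp_pos 1).le, hsε']
          ring_nf
  -- step 6: m^s ≤ 2^(m*s)
  have step6 : (m:ℝ) ^ s ≤ (2:ℝ) ^ ((m:ℝ) * s) := by
    have h1 : (m:ℝ) ≤ (2:ℝ) ^ (m:ℕ) := by
      exact_mod_cast (Nat.lt_two_pow_self (n := m)).le
    calc (m:ℝ) ^ s ≤ ((2:ℝ) ^ (m:ℕ)) ^ s := Real.rpow_le_rpow (by positivity) h1 hs0
      _ = (2:ℝ) ^ ((m:ℝ) * s) := by
          rw [← Real.rpow_natCast (2:ℝ) m, ← Real.rpow_mul (by norm_num)]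
  -- geometric collection
  set E : ℝ := ((m:ℝ) + 1) * (2 * s / ε) with hE
  have hEeq : E = ((m:ℝ) + 1) * (2 * s * u) := by
    rw [hE, hu']; ring
  have hmsu : (0:ℝ) ≤ (m:ℝ) * s * u := by positivity
  have hsu : (0:ℝ) ≤ s * u := by positivity
  have h2u1' : (0:ℝ) ≤ 2 * u - 1 := by linarith
  have hs2u : (0:ℝ) ≤ s * (2 * u - 1) := mul_nonneg hs0 h2u1'
  have hms2u : (0:ℝ) ≤ (m:ℝ) * s * (2 * u - 1) := mul_nonneg (by positivity) h2u1'
  have he1E : ((m:ℝ) * u + 1) * s ≤ E := by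
    rw [hEeq]
    linarith [mul_le_mul_of_nonneg_left (show (1:ℝ) ≤ 2*u by linarith) hs0, hmsu]
  have he2E : (m:ℝ) * u * s ≤ E := by rw [hEeq]; linarith [hmsu, hsu]
  have he3E : (m:ℝ) * s ≤ E := by rw [hEeq]; linarith [hms2u, hsu]
  have h2u1 : (1:ℝ) ≤ 2 * u := by linarith
  have hgeo : (2 * u) ^ (((m:ℝ) * u + 1) * s) * (Real.exp 1) ^ ((m:ℝ) * u * s)
      * (2:ℝ) ^ ((m:ℝ) * s) ≤ B ^ E := by
    have f1 : (2 * u) ^ (((m:ℝ) * u + 1) * s) ≤ (2 * u) ^ E :=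
      Real.rpow_le_rpow_of_exponent_le h2u1 he1E
    have f2 : (Real.exp 1) ^ ((m:ℝ) * u * s) ≤ (Real.exp 1) ^ E :=
      Real.rpow_le_rpow_of_exponent_le he1 he2E
    have f3 : (2:ℝ) ^ ((m:ℝ) * s) ≤ (2:ℝ) ^ E :=
      Real.rpow_le_rpow_of_exponent_le (by norm_num) he3E
    calc (2 * u) ^ (((m:ℝ) * u + 1) * s) * (Real.exp 1) ^ ((m:ℝ) * u * s)
        * (2:ℝ) ^ ((m:ℝ) * s)
        ≤ (2 * u) ^ E * (Real.exp 1) ^ E * (2:ℝ) ^ E := by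
          apply mul_le_mul (mul_le_mul f1 f2 (by positivity) (by positivity)) f3
            (by positivity) (by positivity)
      _ = B ^ E := by
          rw [← Real.mul_rpow (by positivity) (Real.exp_pos 1).le,
            ← Real.mul_rpow (by positivity) (by norm_num)]
          congr 1
          rw [hB, hu']; field_simp; ring
  -- assemble
  have hfε : (0:ℝ) ≤ (m.factorial : ℝ) ^ (s / ε) := by positivity
  have final : ((N.factorial : ℝ)) ^ s ≤ B ^ E * (m.factorial : ℝ) ^ (s / ε) := by
    calc ((N.factorial : ℝ)) ^ s ≤ (N:ℝ) ^ ((N:ℝ) * s) := step1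
      _ ≤ (2 * ((m:ℝ) * u)) ^ (((m:ℝ) * u + 1) * s) := step2
      _ = (2 * u) ^ (((m:ℝ) * u + 1) * s)
          * ((m:ℝ) ^ ((m:ℝ) * u * s) * (m:ℝ) ^ s) := by rw [step3, step4]
      _ ≤ (2 * u) ^ (((m:ℝ) * u + 1) * s)
          * (((Real.exp 1) ^ ((m:ℝ) * u * s) * (m.factorial : ℝ) ^ (s / ε))
            * (2:ℝ) ^ ((m:ℝ) * s)) := by
          apply mul_le_mul_of_nonneg_left _ (by positivity)
          exact mul_le_mul step5 step6 (by positivity) (by positivity)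
      _ = ((2 * u) ^ (((m:ℝ) * u + 1) * s) * (Real.exp 1) ^ ((m:ℝ) * u * s)
          * (2:ℝ) ^ ((m:ℝ) * s)) * (m.factorial : ℝ) ^ (s / ε) := by ring
      _ ≤ B ^ E * (m.factorial : ℝ) ^ (s / ε) :=
          mul_le_mul_of_nonneg_right hgeo hfε
  have hC : (B ^ (2 * s / ε)) ^ (m + 1) = B ^ E := by
    rw [← Real.rpow_natCast (B ^ (2 * s / ε)) (m + 1), ← Real.rpow_mul hB0, hE]
    push_cast
    ring_nf
  rw [hC]
  exact final
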